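/- There exists a strongly convex differentiable ψ : ℝ → ℝ with strictly increasing derivative for which generalized monotonicity fails for d = 2: i.e., there exist x, y ∈ ℝ² with ∑ x_i < ∑ y_i but ∑ ψ'(x_i) ≥ ∑ ψ'(y_i). -/

import Mathlib

private lemma psi_deriv : deriv (fun z : ℝ => z^4/4 + z^2/2) = fun z : ℝ => z^3 + z := by
  funext z
  have h : HasDerivAt (fun z : ℝ => z^4/4 + z^2/2) (z^3 + z) z := by
    have h1 : HasDerivAt (fun z : ℝ => z^4/4) (z^3) z := by
      have := (hasDerivAt_pow 4 z).div_const 4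
      simpa using this.congr_deriv (by ring)
    have h2 : HasDerivAt (fun z : ℝ => z^2/2) z z := by
      have := (hasDerivAt_pow 2 z).div_const 2
      simpa using this.congr_deriv (by ring)
    exact h1.add h2
  exact h.deriv

/-- There is a strongly convex differentiable `ψ : ℝ → ℝ` with strictly
increasing derivative for which generalized monotonicity fails in dimension 2:
some `x, y ∈ ℝ²` have `∑ x_i < ∑ y_i` but `∑ ψ'(x_i) ≥ ∑ ψ'(y_i)`. -/
theorem stmt8 :
    ∃ (ψ : ℝ → ℝ) (m : ℝ), 0 < m ∧ StrongConvexOn Set.univ m ψ ∧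
      Differentiable ℝ ψ ∧ StrictMono (deriv ψ) ∧
      ∃ x y : Fin 2 → ℝ,
        (∑ i, x i < ∑ i, y i) ∧ (∑ i, deriv ψ (y i) ≤ ∑ i, deriv ψ (x i)) := by
  refine ⟨fun z => z^4/4 + z^2/2, 1, one_pos, ?_, ?_, ?_, ![2, -3/2], ![1, 1], ?_, ?_⟩
  · rw [strongConvexOn_iff_convex]
    have h4 : ConvexOn ℝ (Set.univ : Set ℝ) (fun z : ℝ => z ^ 4) :=
      Even.convexOn_pow ⟨2, rfl⟩
    have h := h4.smul (c := (1/4 : ℝ)) (by norm_num)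
    convert h using 2 with z
    any_goals rfl
    simp [Real.norm_eq_abs, sq_abs, smul_eq_mul]
    ring
  · intro z
    exact (((differentiable_pow 4).div_const 4).add ((differentiable_pow 2).div_const 2)) z
  · rw [psi_deriv]
    exact (Odd.strictMono_pow (R := ℝ) ⟨1, by ring⟩).add strictMono_id
  · simp [Fin.sum_univ_two]; norm_num
  · rw [psi_deriv]
    simp [Fin.sum_univ_two]
    norm_num
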